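/- If $(b_n)$ and $(\tilde{b}_n)$ are positive sequences with $b_{n-1}/b_n \leq \tilde{b}_{n-1}/\tilde{b}_n$ for all $n \geq 1$, then $U_n \leq \tilde{U}_n$ for all $n$, where $U_n = s_{2n}/(b_0^2\cdots b_{n-1}^2)$ and $\tilde U_n$ is defined analogously. -/

import Mathlib

/-- The Jacobi operator with zero diagonal and off-diagonal entries `b n`. -/
noncomputable def jacobiOp (b : ℕ → ℝ) (f : ℕ → ℝ) : ℕ → ℝ :=
  fun n => b n * f (n + 1) + (if n = 0 then 0 else b (n - 1) * f (n - 1))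

/-- The moments of the symmetric moment problem: `s_n = (Jⁿ δ₀, δ₀)`. -/
noncomputable def moment (b : ℕ → ℝ) (n : ℕ) : ℝ :=
  ((jacobiOp b)^[n] (fun k => if k = 0 then 1 else 0)) 0

namespace Stmt3Aux

open Finset

noncomputable def fvec (b : ℕ → ℝ) (n : ℕ) : ℕ → ℝ :=
  (jacobiOp b)^[n] (fun k => if k = 0 then 1 else 0)

lemma fvec_zero (b : ℕ → ℝ) (m : ℕ) : fvec b 0 m = if m = 0 then 1 else 0 := rfl

lemma fvec_succ (b : ℕ → ℝ) (n : ℕ) : fvec b (n+1) = jacobiOp b (fvec b n) := by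
  unfold fvec; rw [Function.iterate_succ_apply']

lemma fvec_support (b : ℕ → ℝ) : ∀ n m, n < m → fvec b n m = 0 := by
  intro n
  induction n with
  | zero =>
    intro m hm
    rw [fvec_zero, if_neg (by omega)]
  | succ n ih =>
    intro m hm
    rw [fvec_succ]
    unfold jacobiOp
    have h1 : fvec b n (m+1) = 0 := ih _ (by omega)
    rcases m with _ | m
    · omega
    · have h2 : fvec b n m = 0 := ih _ (by omega)
      simp [h1, h2]

lemma fvec_nonneg (b : ℕ → ℝ) (hb : ∀ n, 0 < b n) : ∀ n m, 0 ≤ fvec b n m := by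
  intro n
  induction n with
  | zero => intro m; rw [fvec_zero]; positivity
  | succ n ih =>
    intro m
    rw [fvec_succ]
    unfold jacobiOp
    have h1 := ih (m+1)
    have h2 := ih (m-1)
    have h3 := (hb m).le
    have h4 := (hb (m-1)).le
    split <;> nlinarith

lemma sym (b f g : ℕ → ℝ) (N : ℕ) (hf : ∀ m, N ≤ m → f m = 0) (hg : ∀ m, N ≤ m → g m = 0) :
    ∑ m ∈ range (N+1), jacobiOp b f m * g m = ∑ m ∈ range (N+1), f m * jacobiOp b g m := by
  unfold jacobiOp
  have expand : ∀ (u v : ℕ → ℝ), (∀ m, N ≤ m → u m = 0) →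
      ∑ m ∈ range (N+1), (b m * u (m + 1) + (if m = 0 then 0 else b (m-1) * u (m-1))) * v m
      = (∑ m ∈ range N, b m * u (m+1) * v m) + ∑ m ∈ range N, b m * u m * v (m+1) := by
    intro u v hu
    have step : ∀ m, (b m * u (m + 1) + (if m = 0 then 0 else b (m-1) * u (m-1))) * v m
        = b m * u (m+1) * v m + (if m = 0 then 0 else b (m-1) * u (m-1) * v m) := by
      intro m; split <;> ring
    rw [Finset.sum_congr rfl (fun m _ => step m), Finset.sum_add_distrib]
    congr 1
    · rw [Finset.sum_range_succ, hu (N+1) (by omega)]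
      simp
    · rw [Finset.sum_range_succ']
      simp
  rw [expand f g hf]
  have h : ∑ m ∈ range (N+1), f m * (b m * g (m + 1) + (if m = 0 then 0 else b (m-1) * g (m-1)))
      = ∑ m ∈ range (N+1), (b m * g (m + 1) + (if m = 0 then 0 else b (m-1) * g (m-1))) * f m := by
    apply Finset.sum_congr rfl; intro m _; ring
  rw [h, expand g f hg, add_comm]
  congr 1 <;> (apply Finset.sum_congr rfl; intro m _; ring)

lemma inner_shift (b : ℕ → ℝ) : ∀ a c : ℕ,
    fvec b (a + c) 0 = ∑ m ∈ range (a + c + 1), fvec b a m * fvec b c m := by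
  intro a
  induction a with
  | zero =>
    intro c
    simp only [Nat.zero_add]
    have h : ∀ m, fvec b 0 m * fvec b c m = if m = 0 then fvec b c m else 0 := by
      intro m; rw [fvec_zero]; split <;> simp
    rw [Finset.sum_congr rfl (fun m _ => h m),
      Finset.sum_ite_eq' (range (c+1)) 0 (fvec b c)]
    simp
  | succ a ih =>
    intro c
    have h1 : a + 1 + c = a + (c + 1) := by omega
    rw [h1, ih (c+1)]
    have h2 : a + (c + 1) + 1 = (a + c + 1) + 1 := by omega
    rw [h2, fvec_succ]
    rw [← sym b (fvec b a) (fvec b c) (a + c + 1)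
      (fun m hm => fvec_support b a m (by omega))
      (fun m hm => fvec_support b c m (by omega))]
    rw [← fvec_succ]

lemma ratio_le (b bt : ℕ → ℝ) (hb : ∀ n, 0 < b n) (hbt : ∀ n, 0 < bt n)
    (hratio : ∀ n : ℕ, 1 ≤ n → b (n - 1) / b n ≤ bt (n - 1) / bt n) :
    ∀ n m, m ≤ n → b m / b n ≤ bt m / bt n := by
  intro n
  induction n with
  | zero =>
    intro m hm
    interval_cases m
    rw [div_self (hb 0).ne', div_self (hbt 0).ne']
  | succ n ih =>
    intro m hm
    rcases Nat.eq_or_lt_of_le hm with h | h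
    · subst h; rw [div_self (hb _).ne', div_self (hbt _).ne']
    · have hmn : m ≤ n := by omega
      have e1 : b m / b (n+1) = (b m / b n) * (b n / b (n+1)) := by
        rw [div_mul_div_comm, mul_comm (b m) (b n), mul_div_mul_left _ _ (hb n).ne']
      have e2 : bt m / bt (n+1) = (bt m / bt n) * (bt n / bt (n+1)) := by
        rw [div_mul_div_comm, mul_comm (bt m) (bt n), mul_div_mul_left _ _ (hbt n).ne']
      rw [e1, e2]
      have hr := hratio (n+1) (by omega)
      simp only [Nat.add_sub_cancel] at hr
      exact mul_le_mul (ih m hmn) hr (div_nonneg (hb n).le (hb (n+1)).le)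
        (div_nonneg (hbt m).le (hbt n).le)

lemma fvec_div_succ (b : ℕ → ℝ) (hb : ∀ n, 0 < b n) (n m : ℕ) :
    fvec b (n+1) m / ∏ i ∈ range (n+1), b i =
    (b m / b n) * (fvec b n (m+1) / ∏ i ∈ range n, b i) +
    (if m = 0 then 0 else (b (m-1) / b n) * (fvec b n (m-1) / ∏ i ∈ range n, b i)) := by
  have hP : (∏ i ∈ range n, b i) ≠ 0 := (Finset.prod_pos (fun i _ => hb i)).ne'
  have hbn : b n ≠ 0 := (hb n).ne'
  rw [fvec_succ, Finset.prod_range_succ]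
  unfold jacobiOp
  rcases eq_or_ne m 0 with h | h
  · subst h
    rw [if_pos rfl, if_pos rfl, add_zero, add_zero, div_mul_div_comm, mul_comm (b n) (∏ i ∈ range n, b i)]
  · simp only [if_neg h]
    rw [div_mul_div_comm, div_mul_div_comm, ← add_div,
      mul_comm (b n) (∏ i ∈ range n, b i)]

lemma key (b bt : ℕ → ℝ) (hb : ∀ n, 0 < b n) (hbt : ∀ n, 0 < bt n)
    (hratio : ∀ n : ℕ, 1 ≤ n → b (n - 1) / b n ≤ bt (n - 1) / bt n) :
    ∀ n m, fvec b n m / ∏ i ∈ range n, b i ≤ fvec bt n m / ∏ i ∈ range n, bt i := by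
  intro n
  induction n with
  | zero => intro m; simp [fvec_zero]
  | succ n ih =>
    intro m
    rw [fvec_div_succ b hb n m, fvec_div_succ bt hbt n m]
    have hnn : ∀ m', 0 ≤ fvec b n m' / ∏ i ∈ range n, b i := fun m' =>
      div_nonneg (fvec_nonneg b hb n m') (Finset.prod_pos (fun i _ => hb i)).le
    have hnnt : ∀ m', 0 ≤ fvec bt n m' / ∏ i ∈ range n, bt i := fun m' =>
      div_nonneg (fvec_nonneg bt hbt n m') (Finset.prod_pos (fun i _ => hbt i)).le
    apply add_le_add
    · by_cases hc : n < m + 1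
      · rw [fvec_support b n (m+1) hc, fvec_support bt n (m+1) hc]
        simp
      · push_neg at hc
        exact mul_le_mul (ratio_le b bt hb hbt hratio n m (by omega)) (ih (m+1))
          (hnn (m+1)) (div_nonneg (hbt m).le (hbt n).le)
    · split
      · exact le_rfl
      · by_cases hc : n < m - 1
        · rw [fvec_support b n (m-1) hc, fvec_support bt n (m-1) hc]
          simp
        · push_neg at hc
          exact mul_le_mul (ratio_le b bt hb hbt hratio n (m-1) hc) (ih (m-1))
            (hnn (m-1)) (div_nonneg (hbt (m-1)).le (hbt n).le)

end Stmt3Aux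

theorem stmt3 (b bt : ℕ → ℝ) (hb : ∀ n, 0 < b n) (hbt : ∀ n, 0 < bt n)
    (hratio : ∀ n : ℕ, 1 ≤ n → b (n - 1) / b n ≤ bt (n - 1) / bt n) :
    ∀ n : ℕ, moment b (2 * n) / ∏ i ∈ Finset.range n, (b i) ^ 2 ≤
      moment bt (2 * n) / ∏ i ∈ Finset.range n, (bt i) ^ 2 := by
  intro n
  have hmom : ∀ (c : ℕ → ℝ), moment c (2 * n) = ∑ m ∈ Finset.range (n + n + 1),
      Stmt3Aux.fvec c n m * Stmt3Aux.fvec c n m := by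
    intro c
    have h : moment c (2 * n) = Stmt3Aux.fvec c (n + n) 0 := by
      unfold moment Stmt3Aux.fvec; rw [two_mul]
    rw [h, Stmt3Aux.inner_shift]
  have hdiv : ∀ (c : ℕ → ℝ), (∀ k, 0 < c k) →
      moment c (2 * n) / ∏ i ∈ Finset.range n, (c i) ^ 2 =
      ∑ m ∈ Finset.range (n + n + 1),
        (Stmt3Aux.fvec c n m / ∏ i ∈ Finset.range n, c i) ^ 2 := by
    intro c hc
    rw [hmom c, Finset.prod_pow, Finset.sum_div]
    apply Finset.sum_congr rfl
    intro m _
    rw [div_pow, sq, sq]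
  rw [hdiv b hb, hdiv bt hbt]
  apply Finset.sum_le_sum
  intro m _
  have h1 := Stmt3Aux.key b bt hb hbt hratio n m
  have h2 : 0 ≤ Stmt3Aux.fvec b n m / ∏ i ∈ Finset.range n, b i :=
    div_nonneg (Stmt3Aux.fvec_nonneg b hb n m) (Finset.prod_pos (fun i _ => hb i)).le
  exact pow_le_pow_left₀ h2 h1 2
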